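/- Let X be hypergeometric with parameters n, k, m, where m = (2+ε)(n/k)·log₂ n for ε > 0 (so E[X] = (2+ε)log₂ n). Then P(X ≤ (2+ε/2)log₂ n) ≤ c/log₂ n for some constant c depending only on ε. -/

import Mathlib

open Finset


lemma vand (a b s : ℕ) :
    ∑ x ∈ range (s+1), a.choose x * b.choose (s-x) = (a+b).choose s := by
  rw [Nat.add_choose_eq, Nat.sum_antidiagonal_eq_sum_range_succ_mk]

lemma sum1 (a b m : ℕ) (ha : 1 ≤ a) (hm : 1 ≤ m) :
    ∑ x ∈ range (m+1), x * (a.choose x * b.choose (m-x))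
      = a * (a-1+b).choose (m-1) := by
  obtain ⟨k', rfl⟩ : ∃ k', a = k' + 1 := ⟨a - 1, by omega⟩
  obtain ⟨m', rfl⟩ : ∃ m', m = m' + 1 := ⟨m - 1, by omega⟩
  rw [Finset.sum_range_succ']
  simp only [Nat.zero_eq, Nat.choose_zero_right, Nat.mul_zero, Nat.zero_mul, add_zero]
  have key : ∀ i, (i+1) * ((k'+1).choose (i+1) * b.choose (m'+1-(i+1)))
      = (k'+1) * (k'.choose i * b.choose (m'-i)) := by
    intro i
    have h := Nat.add_one_mul_choose_eq k' i
    rw [Nat.succ_sub_succ]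
    nlinarith [h]
  calc ∑ i ∈ range (m'+1), (i+1) * ((k'+1).choose (i+1) * b.choose (m'+1-(i+1)))
      = ∑ i ∈ range (m'+1), (k'+1) * (k'.choose i * b.choose (m'-i)) :=
        Finset.sum_congr rfl fun i _ => key i
    _ = (k'+1) * ∑ i ∈ range (m'+1), k'.choose i * b.choose (m'-i) := by
        rw [Finset.mul_sum]
    _ = (k'+1) * (k'+1-1+b).choose (m'+1-1) := by
        rw [vand]; congr 2
lemma sum2 (a b m : ℕ) (hm : 2 ≤ m) :
    ∑ x ∈ range (m+1), x * (x-1) * (a.choose x * b.choose (m-x))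
      = a * (a-1) * (a-2+b).choose (m-2) := by
  match a with
  | 0 =>
    rw [Finset.sum_eq_zero]; · simp
    intro x _
    match x with
    | 0 => simp
    | y+1 => simp [Nat.choose]
  | 1 =>
    rw [Finset.sum_eq_zero]; · simp
    intro x _
    match x with
    | 0 => simp
    | 1 => simp
    | y+2 => rw [Nat.choose_eq_zero_of_lt (by omega)]; ring
  | a''+2 =>
    obtain ⟨m'', rfl⟩ : ∃ m'', m = m'' + 2 := ⟨m - 2, by omega⟩
    rw [Finset.sum_range_succ']
    simp only [Nat.zero_eq, Nat.zero_mul, Nat.mul_zero, add_zero]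
    have key : ∀ i, (i+1) * ((i+1)-1) * ((a''+2).choose (i+1) * b.choose (m''+2-(i+1)))
        = (a''+2) * (i * ((a''+1).choose i * b.choose (m''+1-i))) := by
      intro i
      have h := Nat.add_one_mul_choose_eq (a''+1) i
      have h2 : (i+1)-1 = i := rfl
      have h3 : m''+2-(i+1) = m''+1-i := by omega
      rw [h2, h3]
      calc (i+1) * i * ((a''+2).choose (i+1) * b.choose (m''+1-i))
          = i * ((a''+1+1).choose (i+1) * (i+1)) * b.choose (m''+1-i) := by ring
        _ = i * ((a''+1+1) * (a''+1).choose i) * b.choose (m''+1-i) := by rw [← h]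
        _ = (a''+2) * (i * ((a''+1).choose i * b.choose (m''+1-i))) := by ring
    calc ∑ i ∈ range (m''+2), (i+1) * ((i+1)-1) * ((a''+2).choose (i+1) * b.choose (m''+2-(i+1)))
        = ∑ i ∈ range (m''+2), (a''+2) * (i * ((a''+1).choose i * b.choose (m''+1-i))) :=
          Finset.sum_congr rfl fun i _ => key i
      _ = (a''+2) * ∑ i ∈ range (m''+1+1), i * ((a''+1).choose i * b.choose (m''+1-i)) := by
          rw [Finset.mul_sum]
      _ = (a''+2) * ((a''+1) * (a''+1-1+b).choose (m''+1-1)) := by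
          rw [sum1 (a''+1) b (m''+1) (by omega) (by omega)]
      _ = (a''+2) * (a''+2-1) * (a''+2-2+b).choose (m''+2-2) := by
          simp; ring

lemma ratio (n m : ℕ) (h1 : 1 ≤ m) (h2 : m ≤ n) :
    n * (n-1).choose (m-1) = m * n.choose m := by
  obtain ⟨n', rfl⟩ : ∃ n', n = n' + 1 := ⟨n - 1, by omega⟩
  obtain ⟨m', rfl⟩ : ∃ m', m = m' + 1 := ⟨m - 1, by omega⟩
  have h := Nat.add_one_mul_choose_eq n' m'
  simpa [Nat.add_sub_cancel, mul_comm] using h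

set_option maxHeartbeats 1000000 in
/-- Chebyshev bound for the hypergeometric: if `m = (2+ε)(n/k)·log₂ n` then
`P(X ≤ (2+ε/2) log₂ n) ≤ c / log₂ n` for a constant `c` depending only on `ε`. -/
theorem stmt_6 (ε : ℝ) (hε : 0 < ε) :
    ∃ c : ℝ, ∀ n k m : ℕ, 2 ≤ n → 1 ≤ k → k ≤ n → m ≤ n →
      (m : ℝ) = (2 + ε) * ((n : ℝ) / k) * Real.logb 2 n →
      (∑ x ∈ (Finset.range (m + 1)).filter
          (fun x : ℕ => (x : ℝ) ≤ (2 + ε / 2) * Real.logb 2 n),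
        ((k.choose x * (n - k).choose (m - x) : ℕ) : ℝ) / (n.choose m : ℝ))
        ≤ c / Real.logb 2 n := by
  refine ⟨4 * (2 + ε) / ε ^ 2, ?_⟩
  intro n k m hn hk1 hkn hmn hmeq
  set L := Real.logb 2 n with hLdef
  have hL : 1 ≤ L := by
    rw [hLdef, show (1:ℝ) = Real.logb 2 2 by simp]
    exact Real.logb_le_logb_of_le (by norm_num) (by norm_num) (by exact_mod_cast hn)
  have hL0 : 0 < L := by linarith
  have hk0 : (0:ℝ) < k := by exact_mod_cast hk1
  have hn0 : (0:ℝ) < n := by positivity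
  have hkn' : (k:ℝ) ≤ n := by exact_mod_cast hkn
  have hk1' : (1:ℝ) ≤ k := by exact_mod_cast hk1
  have hn2 : (2:ℝ) ≤ n := by exact_mod_cast hn
  have hμ : (m:ℝ) * k = (2+ε) * n * L := by
    rw [hmeq]; field_simp
  have hdivk : 1 ≤ (n:ℝ)/k := (one_le_div hk0).2 hkn'
  have hm2 : 2 ≤ m := by
    have h1 : (2+ε) ≤ (2+ε)*((n:ℝ)/k) := le_mul_of_one_le_right (by linarith) hdivk
    have h2 : (2+ε)*((n:ℝ)/k) ≤ (2+ε)*((n:ℝ)/k)*L :=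
      le_mul_of_one_le_right (by positivity) hL
    have : (2:ℝ) ≤ m := by rw [hmeq]; linarith
    exact_mod_cast this
  have hm1 : 1 ≤ m := by omega
  set C := ((n.choose m : ℕ) : ℝ) with hCdef
  have hC : 0 < C := by
    have := Nat.choose_pos hmn
    rw [hCdef]; exact_mod_cast this
  set μ := (2+ε) * L with hμdef
  have hμn : μ * n = (m:ℝ) * k := by rw [hμdef]; linarith [hμ]
  -- cast facts
  have F0 : ∑ x ∈ range (m+1), ((k.choose x * (n-k).choose (m-x) : ℕ) : ℝ) = C := by
    rw [← Nat.cast_sum]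
    congr 1
    rw [vand k (n-k) m]
    congr 1
    omega
  have F1 : ∑ x ∈ range (m+1), (x:ℝ) * ((k.choose x * (n-k).choose (m-x) : ℕ) : ℝ)
      = (k:ℝ) * ((n-1).choose (m-1) : ℝ) := by
    have hnat := sum1 k (n-k) m hk1 hm1
    have harg : k-1+(n-k) = n-1 := by omega
    rw [harg] at hnat
    calc ∑ x ∈ range (m+1), (x:ℝ) * ((k.choose x * (n-k).choose (m-x) : ℕ) : ℝ)
        = ((∑ x ∈ range (m+1), x * (k.choose x * (n-k).choose (m-x)) : ℕ) : ℝ) := by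
          rw [Nat.cast_sum]
          exact Finset.sum_congr rfl fun x _ => by push_cast; ring
      _ = (k:ℝ) * ((n-1).choose (m-1) : ℝ) := by rw [hnat]; push_cast; ring
  have F2 : ∑ x ∈ range (m+1), (x:ℝ) * ((x:ℝ)-1) * ((k.choose x * (n-k).choose (m-x) : ℕ) : ℝ)
      = (k:ℝ) * ((k:ℝ)-1) * ((n-2).choose (m-2) : ℝ) := by
    have hnat := sum2 k (n-k) m hm2
    have harg : k * (k-1) * ((k-2+(n-k)).choose (m-2)) = k * (k-1) * ((n-2).choose (m-2)) := by
      rcases Nat.lt_or_ge k 2 with h | h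
      · interval_cases k <;> simp
      · congr 2; omega
    rw [harg] at hnat
    have cast2 : ∀ x : ℕ, ((x*(x-1)*(k.choose x * (n-k).choose (m-x)) : ℕ) : ℝ)
        = (x:ℝ) * ((x:ℝ)-1) * ((k.choose x * (n-k).choose (m-x) : ℕ) : ℝ) := by
      intro x
      rcases x with _ | y
      · simp
      · push_cast [Nat.succ_sub_one]; ring
    calc ∑ x ∈ range (m+1), (x:ℝ) * ((x:ℝ)-1) * ((k.choose x * (n-k).choose (m-x) : ℕ) : ℝ)
        = ((∑ x ∈ range (m+1), x*(x-1)*(k.choose x * (n-k).choose (m-x)) : ℕ) : ℝ) := by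
          rw [Nat.cast_sum]
          exact Finset.sum_congr rfl fun x _ => (cast2 x).symm
      _ = (k:ℝ) * ((k:ℝ)-1) * ((n-2).choose (m-2) : ℝ) := by
          rw [hnat]; push_cast [Nat.cast_sub hk1]; ring
  have R1 : (n:ℝ) * ((n-1).choose (m-1) : ℝ) = (m:ℝ) * C := by
    have h := ratio n m hm1 hmn
    rw [hCdef]
    exact_mod_cast congrArg (Nat.cast : ℕ → ℝ) h
  have R2 : (n:ℝ) * ((n:ℝ)-1) * ((n-2).choose (m-2) : ℝ) = (m:ℝ) * ((m:ℝ)-1) * C := by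
    have hnat := ratio (n-1) (m-1) (by omega) (by omega)
    have e1 : n-1-1 = n-2 := by omega
    have e2 : m-1-1 = m-2 := by omega
    rw [e1, e2] at hnat
    have hcast : ((n-1:ℕ):ℝ) * ((n-2).choose (m-2) : ℝ) = ((m-1:ℕ):ℝ) * ((n-1).choose (m-1) : ℝ) := by
      exact_mod_cast congrArg (Nat.cast : ℕ → ℝ) hnat
    rw [Nat.cast_sub (by omega : 1 ≤ n), Nat.cast_sub hm1] at hcast
    push_cast at hcast
    calc (n:ℝ) * ((n:ℝ)-1) * ((n-2).choose (m-2) : ℝ)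
        = (n:ℝ) * (((n:ℝ)-1) * ((n-2).choose (m-2) : ℝ)) := by ring
      _ = (n:ℝ) * (((m:ℝ)-1) * ((n-1).choose (m-1) : ℝ)) := by rw [hcast]
      _ = ((m:ℝ)-1) * ((n:ℝ) * ((n-1).choose (m-1) : ℝ)) := by ring
      _ = (m:ℝ) * ((m:ℝ)-1) * C := by rw [R1]; ring
  -- abbreviations
  set D1 := ((n-1).choose (m-1) : ℝ) with hD1def
  set D2 := ((n-2).choose (m-2) : ℝ) with hD2def
  have hne : (n:ℝ) ≠ 0 := ne_of_gt hn0
  have hne1 : (n:ℝ) - 1 ≠ 0 := by linarith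
  -- the second-moment sum
  set A := ∑ x ∈ range (m+1), ((x:ℝ) - μ)^2 * ((k.choose x * (n-k).choose (m-x) : ℕ) : ℝ) with hAdef
  have hA : A = (k:ℝ)*((k:ℝ)-1)*D2 + (1-2*μ)*((k:ℝ)*D1) + μ^2*C := by
    rw [hAdef]
    rw [show (∑ x ∈ range (m+1), ((x:ℝ) - μ)^2 * ((k.choose x * (n-k).choose (m-x) : ℕ) : ℝ))
        = ∑ x ∈ range (m+1), ((x:ℝ)*((x:ℝ)-1) * ((k.choose x * (n-k).choose (m-x) : ℕ) : ℝ)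
          + ((1-2*μ)*((x:ℝ) * ((k.choose x * (n-k).choose (m-x) : ℕ) : ℝ))
          + μ^2 * ((k.choose x * (n-k).choose (m-x) : ℕ) : ℝ))) from
      Finset.sum_congr rfl fun x _ => by ring]
    rw [Finset.sum_add_distrib, Finset.sum_add_distrib, F2, ← Finset.mul_sum, F1,
      ← Finset.mul_sum, F0]
    ring
  -- variance bound
  have hm2' : (2:ℝ) ≤ m := by exact_mod_cast hm2
  have hmn' : (m:ℝ) ≤ n := by exact_mod_cast hmn
  have hineq : ((k:ℝ)-1)*((m:ℝ)-1)*n ≤ (m:ℝ)*k*((n:ℝ)-1) := by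
    nlinarith [mul_nonneg (by linarith : (0:ℝ) ≤ (m:ℝ)) (by linarith : (0:ℝ) ≤ (n:ℝ)-(k:ℝ)),
      mul_nonneg (by linarith : (0:ℝ) ≤ (k:ℝ)-1) (by linarith : (0:ℝ) ≤ (n:ℝ))]
  have h2 : (k:ℝ)*((k:ℝ)-1)*(m:ℝ)*((m:ℝ)-1)*(n:ℝ) ≤ ((m:ℝ)*(k:ℝ))^2*((n:ℝ)-1) := by
    nlinarith [mul_le_mul_of_nonneg_left hineq (by positivity : (0:ℝ) ≤ (m:ℝ)*k)]
  have hdiff : (n:ℝ)^2*((n:ℝ)-1) * (μ*C - A)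
      = (((m:ℝ)*k)^2*((n:ℝ)-1) - (k:ℝ)*((k:ℝ)-1)*(m:ℝ)*((m:ℝ)-1)*(n:ℝ)) * C := by
    rw [hA]
    linear_combination (-(k:ℝ)*((k:ℝ)-1)*(n:ℝ)) * R2
      + (-(1-2*μ)*(k:ℝ)*(n:ℝ)*((n:ℝ)-1)) * R1
      + (((n:ℝ)-1)*C*((n:ℝ) - μ*(n:ℝ) + (m:ℝ)*(k:ℝ))) * hμn
  have hKey : A ≤ μ * C := by
    have hnum : 0 ≤ (((m:ℝ)*k)^2*((n:ℝ)-1) - (k:ℝ)*((k:ℝ)-1)*(m:ℝ)*((m:ℝ)-1)*(n:ℝ)) * C :=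
      mul_nonneg (by linarith) hC.le
    have hden : 0 < (n:ℝ)^2*((n:ℝ)-1) := by nlinarith
    nlinarith [hdiff, hnum, hden]
  -- Chebyshev step
  set t := (ε/2) * L with htdef
  have ht : 0 < t := by positivity
  set S := ∑ x ∈ (range (m+1)).filter (fun x : ℕ => (x:ℝ) ≤ (2+ε/2)*L),
    ((k.choose x * (n-k).choose (m-x) : ℕ) : ℝ) with hSdef
  have hstep1 : t^2 * S ≤ A := by
    rw [hSdef, Finset.mul_sum]
    calc ∑ x ∈ (range (m+1)).filter (fun x : ℕ => (x:ℝ) ≤ (2+ε/2)*L),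
          t^2 * ((k.choose x * (n-k).choose (m-x) : ℕ) : ℝ)
        ≤ ∑ x ∈ (range (m+1)).filter (fun x : ℕ => (x:ℝ) ≤ (2+ε/2)*L),
          ((x:ℝ) - μ)^2 * ((k.choose x * (n-k).choose (m-x) : ℕ) : ℝ) := by
          apply Finset.sum_le_sum
          intro x hx
          have hxle : (x:ℝ) ≤ (2+ε/2)*L := (Finset.mem_filter.1 hx).2
          have htx : t ≤ μ - x := by rw [htdef, hμdef]; linarith
          have : t^2 ≤ (μ - (x:ℝ))^2 := by nlinarith
          have hsq : (μ - (x:ℝ))^2 = ((x:ℝ) - μ)^2 := by ring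
          rw [hsq] at this
          exact mul_le_mul_of_nonneg_right this (by positivity)
      _ ≤ A := by
          rw [hAdef]
          apply Finset.sum_le_sum_of_subset_of_nonneg (Finset.filter_subset _ _)
          intro x _ _
          positivity
  have hS0 : 0 ≤ S := by
    rw [hSdef]; apply Finset.sum_nonneg; intro x _; positivity
  have hstep2 : t^2 * S ≤ μ * C := le_trans hstep1 hKey
  rw [show (∑ x ∈ (Finset.range (m + 1)).filter
          (fun x : ℕ => (x : ℝ) ≤ (2 + ε / 2) * Real.logb 2 n),
        ((k.choose x * (n - k).choose (m - x) : ℕ) : ℝ) / (n.choose m : ℝ)) = S / C from by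
    rw [hSdef, Finset.sum_div]]
  rw [div_le_div_iff₀ hC hL0]
  -- from hstep2 : ((ε/2)*L)^2 * S ≤ (2+ε)*L*C, conclude S * L ≤ (4*(2+ε)/ε^2) * C
  have hεne : ε ≠ 0 := ne_of_gt hε
  have hLne : L ≠ 0 := ne_of_gt hL0
  have hmul := mul_le_mul_of_nonneg_left hstep2 (by positivity : (0:ℝ) ≤ 4/(ε^2*L))
  have e1 : 4/(ε^2*L) * (t^2 * S) = S * L := by rw [htdef]; field_simp; ring
  have e2 : 4/(ε^2*L) * (μ * C) = 4*(2+ε)/ε^2 * C := by rw [hμdef]; field_simp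
  rw [e1, e2] at hmul
  exact hmul
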